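/- A map u : A → B in a tribe is anodyne if and only if it is a strong deformation retract, i.e. there exist a retraction r : B → A with r∘u = 1_A and, for a path object (PB, ∂₀, ∂₁, σ) for B, a map h : B → PB with ∂₀∘h = u∘r, ∂₁∘h = 1_B and h∘u = σ∘u. -/

import Mathlib

open CategoryTheory CategoryTheory.Limits

universe w v u v' u' v'' u''

/-- A *clan* structure on a category `E`: a terminal object together with a class of
maps (the *fibrations*) containing the isomorphisms, closed under composition and
base changes (every fibration is carrable and any pullback of a fibration is a
fibration), and containing every map to the terminal object. -/
structure Clan (E : Type u) [Category.{v} E] where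
  fib : MorphismProperty E
  one : E
  one_isTerminal : IsTerminal one
  fib_of_isIso : ∀ ⦃A B : E⦄ (f : A ⟶ B), IsIso f → fib f
  fib_comp : ∀ ⦃A B C : E⦄ {f : A ⟶ B} {g : B ⟶ C}, fib f → fib g → fib (f ≫ g)
  carrable : ∀ ⦃A B X : E⦄ (f : A ⟶ B) ⦃p : X ⟶ B⦄, fib p →
    ∃ (P : E) (p₁ : P ⟶ A) (p₂ : P ⟶ X), IsPullback p₁ p₂ f p
  fib_baseChange : ∀ ⦃P A X B : E⦄ {p₁ : P ⟶ A} {p₂ : P ⟶ X} {f : A ⟶ B} {p : X ⟶ B},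
    IsPullback p₁ p₂ f p → fib p → fib p₁
  fib_toOne : ∀ X : E, fib (one_isTerminal.from X)

/-- A *morphism of clans* is a functor taking fibrations to fibrations, preserving
base changes of fibrations, and taking the terminal object to a terminal object. -/
structure IsClanMorphism {E : Type u} {E' : Type u'} [Category.{v} E] [Category.{v'} E']
    (C : Clan E) (D : Clan E') (F : E ⥤ E') : Prop where
  map_fib : ∀ ⦃A B : E⦄ (f : A ⟶ B), C.fib f → D.fib (F.map f)
  map_isPullback : ∀ ⦃P A X B : E⦄ {p₁ : P ⟶ A} {p₂ : P ⟶ X} {f : A ⟶ B} {p : X ⟶ B},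
    IsPullback p₁ p₂ f p → C.fib p →
      IsPullback (F.map p₁) (F.map p₂) (F.map f) (F.map p)
  preserves_terminal : Nonempty (IsTerminal (F.obj C.one))

/-- The local category `E(A)`: the full subcategory of `Over A` spanned by the
fibrations `X ↠ A`. -/
abbrev ClanSlice {E : Type u} [Category.{v} E] (C : Clan E) (A : E) :=
  ObjectProperty.FullSubcategory (fun X : Over A => C.fib X.hom)

/-- The underlying morphism of `Over A` of a morphism of `ClanSlice C A`. -/
def ClanSlice.homOf {E : Type u} [Category.{v} E] {C : Clan E} {A : E}
    {X Y : ClanSlice C A} (u : X ⟶ Y) : X.obj ⟶ Y.obj := u.hom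

/-- A map in a clan is *anodyne* if it has the left lifting property with respect to
every fibration. -/
def Anodyne {E : Type u} [Category.{v} E] (C : Clan E) : MorphismProperty E :=
  fun _ _ u => ∀ ⦃X Y : E⦄ (f : X ⟶ Y), C.fib f → HasLiftingProperty u f

/-- A *tribe* is a clan in which every map factors as an anodyne map followed by a
fibration, and every base change of an anodyne map along a fibration is anodyne. -/
structure Tribe (E : Type u) [Category.{v} E] extends Clan E where
  exists_fact : ∀ ⦃A B : E⦄ (f : A ⟶ B), ∃ (Z : E) (u : A ⟶ Z) (p : Z ⟶ B),
    Anodyne toClan u ∧ fib p ∧ u ≫ p = f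
  anodyne_baseChange : ∀ ⦃P A X B : E⦄ {p₁ : P ⟶ A} {p₂ : P ⟶ X} {f : A ⟶ B} {u : X ⟶ B},
    IsPullback p₁ p₂ f u → fib f → Anodyne toClan u → Anodyne toClan p₁

/-- A *path object* for `B`: a factorization of the diagonal `B ⟶ B × B` as an
anodyne map `σ` followed by a fibration `(∂₀, ∂₁)`.  The product `B × B` is
witnessed by a pullback square over the terminal object. -/
structure PathObj {E : Type u} [Category.{v} E] (T : Tribe E) (B : E) where
  P : E
  σ : B ⟶ P
  d₀ : P ⟶ B
  d₁ : P ⟶ B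
  σ_d₀ : σ ≫ d₀ = 𝟙 B
  σ_d₁ : σ ≫ d₁ = 𝟙 B
  anodyne_σ : Anodyne T.toClan σ
  BB : E
  pr₁ : BB ⟶ B
  pr₂ : BB ⟶ B
  isProd : IsPullback pr₁ pr₂ (T.one_isTerminal.from B) (T.one_isTerminal.from B)
  pair : P ⟶ BB
  pair_pr₁ : pair ≫ pr₁ = d₀
  pair_pr₂ : pair ≫ pr₂ = d₁
  fib_pair : T.fib pair

/-- Two maps `f g : A ⟶ B` in a tribe are *homotopic* if there are a path object for
`B` and a homotopy `H : A ⟶ PB` with `∂₀ ∘ H = f` and `∂₁ ∘ H = g`. -/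
def Homotopic {E : Type u} [Category.{v} E] (T : Tribe E) {A B : E} (f g : A ⟶ B) : Prop :=
  ∃ (Q : PathObj T B) (H : A ⟶ Q.P), H ≫ Q.d₀ = f ∧ H ≫ Q.d₁ = g

/-- A map is a *homotopy equivalence* if it admits a homotopy inverse. -/
def IsHomotopyEquiv {E : Type u} [Category.{v} E] (T : Tribe E) {X Y : E} (f : X ⟶ Y) : Prop :=
  ∃ g : Y ⟶ X, Homotopic T (f ≫ g) (𝟙 X) ∧ Homotopic T (g ≫ f) (𝟙 Y)

/-- The local category `E(A)` of a tribe: the full subcategory of `Over A` spanned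
by the fibrations `X ↠ A`. -/
abbrev TribeSlice {E : Type u} [Category.{v} E] (T : Tribe E) (A : E) :=
  ObjectProperty.FullSubcategory (fun X : Over A => T.fib X.hom)

/-- The underlying morphism of `Over A` of a morphism of `TribeSlice T A`. -/
def TribeSlice.homOf {E : Type u} [Category.{v} E] {T : Tribe E} {A : E}
    {X Y : TribeSlice T A} (u : X ⟶ Y) : X.obj ⟶ Y.obj := u.hom

/-- A *morphism of tribes* is a morphism of clans that moreover takes anodyne maps
to anodyne maps. -/
structure IsTribeMorphism {E : Type u} {E' : Type u'} [Category.{v} E] [Category.{v'} E']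
    (T : Tribe E) (T' : Tribe E') (F : E ⥤ E')
    extends IsClanMorphism T.toClan T'.toClan F : Prop where
  map_anodyne : ∀ ⦃A B : E⦄ (u : A ⟶ B), Anodyne T.toClan u → Anodyne T'.toClan (F.map u)

/-- The homotopy relation, as a `HomRel`; the homotopy category `Ho(E)` is the
quotient of `E` by this congruence. -/
def HoRel {E : Type u} [Category.{v} E] (T : Tribe E) : HomRel E :=
  fun {_ _} f g => Homotopic T f g

/-- A map `u : A ⟶ B` in a tribe is anodyne iff it is a strong
deformation retract: there are a retraction `r : B ⟶ A` with `r ∘ u = 1`, a path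
object `(PB, ∂₀, ∂₁, σ)` for `B`, and a homotopy `h : B ⟶ PB` with `∂₀ ∘ h = u ∘ r`,
`∂₁ ∘ h = 1_B` and `h ∘ u = σ ∘ u`. -/
theorem anodyne_iff_strongDeformationRetract {E : Type u} [Category.{v} E] (T : Tribe E)
    {A B : E} (u : A ⟶ B) :
    Anodyne T.toClan u ↔
      ∃ (r : B ⟶ A) (Q : PathObj T B) (h : B ⟶ Q.P),
        u ≫ r = 𝟙 A ∧ h ≫ Q.d₀ = r ≫ u ∧ h ≫ Q.d₁ = 𝟙 B ∧ u ≫ h = u ≫ Q.σ := by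
  constructor
  · intro hu
    -- build the product B × B
    obtain ⟨BB, pr₁, pr₂, hProd⟩ :=
      T.carrable (T.one_isTerminal.from B) (T.fib_toOne B)
    -- the diagonal
    set δ : B ⟶ BB := hProd.lift (𝟙 B) (𝟙 B) (T.one_isTerminal.hom_ext _ _) with hδ
    have δ₁ : δ ≫ pr₁ = 𝟙 B := hProd.lift_fst _ _ _
    have δ₂ : δ ≫ pr₂ = 𝟙 B := hProd.lift_snd _ _ _
    -- factor the diagonal
    obtain ⟨P, σ, pair, hσ, hpair, hfact⟩ := T.exists_fact δ
    have σd₀ : σ ≫ (pair ≫ pr₁) = 𝟙 B := by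
      rw [← Category.assoc, hfact, δ₁]
    have σd₁ : σ ≫ (pair ≫ pr₂) = 𝟙 B := by
      rw [← Category.assoc, hfact, δ₂]
    set Q : PathObj T B :=
      ⟨P, σ, pair ≫ pr₁, pair ≫ pr₂, σd₀, σd₁, hσ, BB, pr₁, pr₂, hProd, pair,
        rfl, rfl, hpair⟩ with hQ
    -- the retraction r
    haveI : HasLiftingProperty u (T.one_isTerminal.from A) :=
      hu (T.one_isTerminal.from A) (T.fib_toOne A)
    have sq₁ : CommSq (𝟙 A) u (T.one_isTerminal.from A) (T.one_isTerminal.from B) :=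
      ⟨T.one_isTerminal.hom_ext _ _⟩
    set r : B ⟶ A := sq₁.lift with hr
    have hur : u ≫ r = 𝟙 A := sq₁.fac_left
    -- the homotopy h
    set β : B ⟶ BB := hProd.lift (r ≫ u) (𝟙 B) (T.one_isTerminal.hom_ext _ _) with hβ
    have β₁ : β ≫ pr₁ = r ≫ u := hProd.lift_fst _ _ _
    have β₂ : β ≫ pr₂ = 𝟙 B := hProd.lift_snd _ _ _
    haveI : HasLiftingProperty u pair := hu pair hpair
    have sq₂ : CommSq (u ≫ σ) u pair β := by
      constructor
      apply hProd.hom_ext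
      · simp only [Category.assoc, σd₀, β₁, Category.comp_id]
        rw [← Category.assoc, hur, Category.id_comp]
      · simp only [Category.assoc, σd₁, β₂, Category.comp_id]
    refine ⟨r, Q, sq₂.lift, hur, ?_, ?_, sq₂.fac_left⟩
    · show sq₂.lift ≫ pair ≫ pr₁ = r ≫ u
      rw [← Category.assoc, sq₂.fac_right, β₁]
    · show sq₂.lift ≫ pair ≫ pr₂ = 𝟙 B
      rw [← Category.assoc, sq₂.fac_right, β₂]
  · rintro ⟨r, Q, h, hur, hd₀, hd₁, huh⟩
    intro X Y f hf
    constructor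
    intro a b sq
    -- pull back f along b
    obtain ⟨Z, q, p₂, hpb⟩ := T.carrable b hf
    have hq : T.fib q := T.fib_baseChange hpb hf
    set v : A ⟶ Z := hpb.lift u a sq.w.symm with hv
    have hvq : v ≫ q = u := hpb.lift_fst _ _ _
    have hvp : v ≫ p₂ = a := hpb.lift_snd _ _ _
    -- pull back q along d₀
    obtain ⟨W, w₁, w₂, hW⟩ := T.carrable Q.d₀ hq
    have hw₁ : T.fib w₁ := T.fib_baseChange hW hq
    -- the anodyne map i : Z ⟶ W
    set i : Z ⟶ W := hW.lift (q ≫ Q.σ) (𝟙 Z)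
      (by rw [Category.assoc, Q.σ_d₀, Category.comp_id, Category.id_comp]) with hi
    have hiw₁ : i ≫ w₁ = q ≫ Q.σ := hW.lift_fst _ _ _
    have hiw₂ : i ≫ w₂ = 𝟙 Z := hW.lift_snd _ _ _
    have hZpb : IsPullback i q w₁ Q.σ := by
      apply IsPullback.of_right (h₁₂ := w₂) (h₂₂ := Q.d₀) (v₁₃ := q) ?_ hiw₁ hW.flip
      rw [hiw₂, Q.σ_d₀]
      exact IsPullback.of_horiz_isIso ⟨by simp⟩
    have hian : Anodyne T.toClan i := T.anodyne_baseChange hZpb hw₁ Q.anodyne_σ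
    -- transport τ : W ⟶ Z
    haveI : HasLiftingProperty i q := hian q hq
    have sqτ : CommSq (𝟙 Z) i q (w₁ ≫ Q.d₁) := by
      constructor
      rw [Category.id_comp, ← Category.assoc, hiw₁, Category.assoc, Q.σ_d₁,
        Category.comp_id]
        -- the map k : B ⟶ W
    set k : B ⟶ W := hW.lift h (r ≫ v)
      (by rw [hd₀, Category.assoc, hvq]) with hk
    have hkw₁ : k ≫ w₁ = h := hW.lift_fst _ _ _
    have hkw₂ : k ≫ w₂ = r ≫ v := hW.lift_snd _ _ _
    -- the lift
    refine ⟨⟨⟨k ≫ sqτ.lift ≫ p₂, ?_, ?_⟩⟩⟩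
    · have huk : u ≫ k = v ≫ i := by
        apply hW.hom_ext
        · rw [Category.assoc, Category.assoc, hkw₁, hiw₁, ← Category.assoc, hvq, huh]
        · rw [Category.assoc, Category.assoc, hkw₂, hiw₂, Category.comp_id,
            ← Category.assoc, hur, Category.id_comp]
      have hks : u ≫ k ≫ sqτ.lift = v := by
        rw [← Category.assoc, huk, Category.assoc, sqτ.fac_left, Category.comp_id]
      rw [← Category.assoc, ← Category.assoc, Category.assoc u k, hks, hvp]
    · have h2 : sqτ.lift ≫ p₂ ≫ f = w₁ ≫ Q.d₁ ≫ b := by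
        rw [← hpb.w, ← Category.assoc, sqτ.fac_right, Category.assoc]
      simp only [Category.assoc]
      rw [h2, ← Category.assoc, hkw₁, ← Category.assoc, hd₁, Category.id_comp]
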